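/- arXiv:1103.3936 — 3 statements merged into one kernel-verified Lean document; each statement's English description precedes it below -/
import Mathlib

section
/- Let A be a ring whose center O is Noetherian, and assume A is finitely generated as a module over O. Let M be a Noetherian (finitely generated) left A-module whose support over O has Krull dimension at most e, let N be a finitely generated left A-module, and let φ : M → N be an injective A-linear map. Then there exists a finitely generated left A-module K whose support over O has Krull dimension at most e, and an A-linear map ψ : N → K such that ψ ∘ φ is injective. -/
open CategoryTheory

/-- Krull dimension is monotone with respect to subset inclusion. -/
lemma krullDim_le_of_subset' {α : Type*} [Preorder α] {s t : Set α} (h : s ⊆ t) :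
    Order.krullDim s ≤ Order.krullDim t :=
  Order.krullDim_le_of_strictMono (Set.inclusion h) (fun _ _ hab => hab)

/-- Let `A` be a ring whose center `O` is Noetherian, and assume `A` is
finitely generated as a module over `O`.  Let `M` be a finitely generated left `A`-module whose
support over `O` has Krull dimension at most `e`, let `N` be a finitely generated left
`A`-module, and let `φ : M → N` be an injective `A`-linear map.  Then there exists a finitely
generated left `A`-module `K` whose support over `O` has Krull dimension at most `e`, and an
`A`-linear map `ψ : N → K` such that `ψ ∘ φ` is injective. -/
theorem stmt0 (O A : Type) [CommRing O] [Ring A] [Algebra O A]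
    (hcenter : (algebraMap O A).range = Subring.center A)
    [IsNoetherianRing O] [Module.Finite O A]
    (e : ℕ)
    (M N : Type) [AddCommGroup M] [Module A M] [Module O M] [IsScalarTower O A M]
    [AddCommGroup N] [Module A N] [Module O N] [IsScalarTower O A N]
    [Module.Finite A M] [Module.Finite A N]
    (hM : Order.krullDim (Module.support O M) ≤ (e : WithBot ℕ∞))
    (φ : M →ₗ[A] N) (hφ : Function.Injective φ) :
    ∃ (K : Type) (_ : AddCommGroup K) (_ : Module A K) (_ : Module O K)
      (_ : IsScalarTower O A K) (_ : Module.Finite A K)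
      (ψ : N →ₗ[A] K),
      Order.krullDim (Module.support O K) ≤ (e : WithBot ℕ∞) ∧
        Function.Injective (ψ ∘ₗ φ) := by
  classical
  -- Zorn: a maximal submodule T of N disjoint from range φ
  have hzorn : ∀ c ⊆ {T : Submodule A N | Disjoint T (LinearMap.range φ)},
      IsChain (· ≤ ·) c → ∃ ub ∈ {T : Submodule A N | Disjoint T (LinearMap.range φ)},
        ∀ z ∈ c, z ≤ ub := by
    intro c hcs hchain
    rcases Set.eq_empty_or_nonempty c with rfl | hne
    · exact ⟨⊥, disjoint_bot_left, by simp⟩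
    · refine ⟨sSup c, ?_, fun z hz => le_sSup hz⟩
      rw [Set.mem_setOf_eq, disjoint_iff, eq_bot_iff]
      rintro x ⟨hx1, hx2⟩
      obtain ⟨T', hT'c, hxT'⟩ := (Submodule.mem_sSup_of_directed hne hchain.directedOn).mp hx1
      exact (disjoint_iff.mp (hcs hT'c)) ▸ (Submodule.mem_inf.mpr ⟨hxT', hx2⟩)
  obtain ⟨T, hTmax⟩ := zorn_le₀ {T : Submodule A N | Disjoint T (LinearMap.range φ)} hzorn
  have hT : Disjoint T (LinearMap.range φ) := hTmax.prop
  set K := N ⧸ T with hK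
  haveI : Module.Finite O M := Module.Finite.trans A M
  haveI : Module.Finite O K := Module.Finite.trans A K
  haveI : IsNoetherian O K := isNoetherian_of_isNoetherianRing_of_finite O K
  refine ⟨K, inferInstance, inferInstance, inferInstance, inferInstance, inferInstance,
    T.mkQ, ?_, ?_⟩
  · -- dimension bound via support K ⊆ support M
    refine le_trans (krullDim_le_of_subset' ?_) hM
    intro q hq
    rw [Module.mem_support_iff_of_finite] at hq ⊢
    by_contra hann
    obtain ⟨s, hsM, hsq⟩ := SetLike.not_le_iff_exists.mp hann
    -- s kills M; multiplication by s on K is A-linear since algebraMap O A s is central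
    have hcent : ∀ a : A, a * algebraMap O A s = algebraMap O A s * a := by
      have h1 : algebraMap O A s ∈ Subring.center A := by
        rw [← hcenter]; exact ⟨s, rfl⟩
      exact fun a => Subring.mem_center_iff.mp h1 a
    set f : K →ₗ[A] K :=
      { toFun := fun k => s • k
        map_add' := fun x y => smul_add s x y
        map_smul' := fun a k => by
          simp only [RingHom.id_apply]
          rw [← algebraMap_smul A s k, ← algebraMap_smul A s (a • k),
            ← mul_smul, ← mul_smul, hcent] } with hf
    -- the kernel chain of iterates of f stabilizes
    haveI : IsNoetherian A K := isNoetherian_of_tower O inferInstance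
    obtain ⟨n, hn⟩ := monotone_stabilizes_iff_noetherian.mpr inferInstance f.iterateKer
    set n₀ := n + 1 with hn₀
    have hpow : ∀ (m : ℕ) (k : K), ((f ^ m : Module.End A K) k) = s ^ m • k := by
      intro m
      induction m with
      | zero => intro k; simp
      | succ i ih =>
        intro k
        rw [pow_succ, Module.End.mul_apply]
        show (f ^ i) (s • k) = s ^ (i + 1) • k
        rw [ih, ← mul_smul, ← pow_succ]
    have hker : ∀ m : ℕ, LinearMap.ker (f ^ m : Module.End A K) = f.iterateKer m := by
      intro m
      ext k
      simp [LinearMap.mem_ker, LinearMap.iterateKer, ← Module.End.pow_apply]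
      exact Iff.rfl
    -- range (f ^ n₀) meets the image of M trivially
    have hdisj : LinearMap.range (f ^ n₀ : Module.End A K) ⊓
        LinearMap.range (T.mkQ ∘ₗ φ) = ⊥ := by
      rw [eq_bot_iff]
      rintro y ⟨⟨x, hx⟩, ⟨m, hm⟩⟩
      have hfy : f y = 0 := by
        have hsm : s • m = 0 := Module.mem_annihilator.mp hsM m
        have h2 : f y = T.mkQ (φ (s • m)) := by
          rw [← hm]
          show s • (T.mkQ (φ m)) = T.mkQ (φ (s • m))
          rw [← algebraMap_smul A s m, map_smul, map_smul, algebraMap_smul]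
        rw [h2, hsm, map_zero, map_zero]
      have hy1 : (f ^ n₀ : Module.End A K) y = 0 := by
        rw [pow_succ, Module.End.mul_apply, hfy, map_zero]
      have hx2 : x ∈ f.iterateKer (n₀ + n₀) := by
        rw [← hker, LinearMap.mem_ker, pow_add, Module.End.mul_apply, hx, hy1]
      have hstab : f.iterateKer (n₀ + n₀) = f.iterateKer n₀ :=
        (hn (n₀ + n₀) (by omega)).symm.trans (hn n₀ (by omega))
      rw [hstab, ← hker, LinearMap.mem_ker] at hx2
      rw [Submodule.mem_bot, ← hx, hx2]
    -- essentiality: range (f ^ n₀) must be ⊥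
    have hess : LinearMap.range (f ^ n₀ : Module.End A K) = ⊥ := by
      set S' := Submodule.comap T.mkQ (LinearMap.range (f ^ n₀ : Module.End A K)) with hS'
      have hTS' : T ≤ S' := by
        intro x hx
        have : T.mkQ x = 0 := (Submodule.Quotient.mk_eq_zero T).mpr hx
        simp [hS', Submodule.mem_comap, this]
      have hS'mem : Disjoint S' (LinearMap.range φ) := by
        rw [disjoint_iff, eq_bot_iff]
        rintro x ⟨hx1, hx2⟩
        obtain ⟨m, hm⟩ := hx2
        have h1 : T.mkQ x ∈ LinearMap.range (f ^ n₀ : Module.End A K) := hx1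
        have h2 : T.mkQ x ∈ LinearMap.range (T.mkQ ∘ₗ φ) := ⟨m, by simp [hm]⟩
        have h3 : T.mkQ x = 0 := by
          have := hdisj ▸ Submodule.mem_inf.mpr ⟨h1, h2⟩
          simpa using this
        have hxT : x ∈ T := (Submodule.Quotient.mk_eq_zero T).mp h3
        exact (disjoint_iff.mp hT) ▸ Submodule.mem_inf.mpr ⟨hxT, ⟨m, hm⟩⟩
      have hS'T : S' = T := (hTmax.eq_of_le hS'mem hTS').symm
      have hsurj : Function.Surjective T.mkQ := Submodule.mkQ_surjective T
      rw [← Submodule.map_comap_eq_of_surjective hsurj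
        (LinearMap.range (f ^ n₀ : Module.End A K)), ← hS', hS'T]
      rw [eq_bot_iff]
      rintro y ⟨x, hxT, rfl⟩
      rw [Submodule.mem_bot, Submodule.mkQ_apply, Submodule.Quotient.mk_eq_zero]
      exact hxT
    -- hence s ^ n₀ annihilates K, contradicting s ∉ q
    have hsn : s ^ n₀ ∈ Module.annihilator O K := by
      refine Module.mem_annihilator.mpr fun k => ?_
      have h0 : (f ^ n₀ : Module.End A K) k ∈
          LinearMap.range (f ^ n₀ : Module.End A K) := ⟨k, rfl⟩
      rw [hess, Submodule.mem_bot, hpow] at h0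
      exact h0
    exact hsq (q.isPrime.mem_of_pow_mem n₀ (hq hsn))
  · -- injectivity of mkQ ∘ φ
    rw [← LinearMap.ker_eq_bot, LinearMap.ker_comp, Submodule.ker_mkQ, eq_bot_iff]
    intro m hm
    have hmem : φ m ∈ T ⊓ LinearMap.range φ := Submodule.mem_inf.mpr ⟨hm, ⟨m, rfl⟩⟩
    rw [disjoint_iff.mp hT, Submodule.mem_bot] at hmem
    rw [Submodule.mem_bot]
    exact hφ (by rw [hmem, map_zero])
end

section
/- Let A be a ring whose center O is Noetherian and over which A is a finitely generated module. Let M be a finitely generated left A-module, E an injective envelope of M in the category of left A-modules, θ : M → E the canonical embedding, and α : N → E any A-linear map extending θ along an injection φ : M → N. Then the image K = Im(α) satisfies: for every prime p of O not in the support of M, the localization K_p vanishes. -/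
/-- Let `A` be a ring whose center `O` is Noetherian and over which `A` is a
finitely generated module.  Let `M` be a finitely generated left `A`-module, `E` an injective
envelope of `M` (an injective module together with an essential embedding `θ : M → E`), and
`α : N → E` any `A`-linear map extending `θ` along an injection `φ : M → N`.  Then the image
`K = Im(α)` satisfies: for every prime `p` of `O` not in the support of `M`, the localization
`K_p` vanishes. -/
theorem stmt1 (O A : Type) [CommRing O] [Ring A] [Algebra O A]
    (hcenter : (algebraMap O A).range = Subring.center A)
    [IsNoetherianRing O] [Module.Finite O A]
    (M N E : Type) [AddCommGroup M] [Module A M] [Module O M] [IsScalarTower O A M]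
    [AddCommGroup N] [Module A N]
    [AddCommGroup E] [Module A E] [Module O E] [IsScalarTower O A E]
    [Module.Finite A M]
    [Module.Injective A E]
    (θ : M →ₗ[A] E) (hθ : Function.Injective θ)
    (hessential : ∀ S : Submodule A E, S ≠ ⊥ → S ⊓ LinearMap.range θ ≠ ⊥)
    (φ : M →ₗ[A] N) (hφ : Function.Injective φ)
    (α : N →ₗ[A] E) (hα : α ∘ₗ φ = θ) :
    ∀ p : PrimeSpectrum O, p ∉ Module.support O M →
      Subsingleton
        (LocalizedModule p.asIdeal.primeCompl
          ↥((LinearMap.range α).restrictScalars O)) := by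
  intro p hp
  -- commuting of O-scalars with A-scalars on any O,A-tower module
  have hcomm : ∀ (o : O) (a : A) (y : E), o • a • y = a • o • y := by
    intro o a y
    have hc : algebraMap O A o ∈ Subring.center A := by
      rw [← hcenter]; exact ⟨o, rfl⟩
    rw [← algebraMap_smul A o (a • y), ← algebraMap_smul A o y,
      ← mul_smul, ← mul_smul, (Subring.mem_center_iff.mp hc a)]
  -- M is a finite O-module
  haveI : Module.Finite O M := Module.Finite.trans A M
  -- find s annihilating M with s ∉ p
  rw [Module.support_eq_zeroLocus] at hp
  rw [PrimeSpectrum.mem_zeroLocus] at hp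
  obtain ⟨s, hsann, hsp⟩ := Set.not_subset.mp hp
  have hsM : ∀ m : M, s • m = 0 := fun m =>
    Module.mem_annihilator.mp hsann m
  -- key claim: every element of E is killed by a power of s
  have key : ∀ x : E, ∃ n : ℕ, s ^ n • x = 0 := by
    intro x
    -- the A-span of x is a Noetherian O-module
    set T : Submodule A E := Submodule.span A {x} with hT
    haveI : Module.Finite A T := by
      rw [Module.Finite.iff_fg]
      exact Submodule.fg_span_singleton x
    haveI : Module.Finite O T := Module.Finite.trans A T
    haveI : IsNoetherian O T := isNoetherian_of_isNoetherianRing_of_finite O T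
    -- chain of submodules of T
    let c : ℕ →o Submodule O T :=
      ⟨fun n => Submodule.comap ((T.restrictScalars O).subtype)
          (LinearMap.ker ((s ^ n) • (LinearMap.id : E →ₗ[O] E))),
        by
          intro i j hij
          intro y hy
          simp only [Submodule.mem_comap, LinearMap.mem_ker, LinearMap.smul_apply,
            LinearMap.id_apply] at hy ⊢
          obtain ⟨k, rfl⟩ := Nat.exists_eq_add_of_le hij
          change s ^ i • (y : E) = 0 at hy
          show s ^ (i + k) • (y : E) = 0
          rw [pow_add, mul_comm, mul_smul, hy, smul_zero]⟩
    obtain ⟨n, hn⟩ := monotone_stabilizes_iff_noetherian.mpr inferInstance c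
    refine ⟨n, ?_⟩
    by_contra hne
    have hSne : Submodule.span A {s ^ n • x} ≠ ⊥ := by
      intro h
      apply hne
      have := Submodule.mem_span_singleton_self (R := A) (s ^ n • x)
      rw [h, Submodule.mem_bot] at this
      exact this
    obtain ⟨y, hy, hy0⟩ :=
      Submodule.exists_mem_ne_zero_of_ne_bot (hessential _ hSne)
    obtain ⟨hyS, hyθ⟩ := Submodule.mem_inf.mp hy
    obtain ⟨a, rfl⟩ := Submodule.mem_span_singleton.mp hyS
    obtain ⟨m, hm⟩ := hyθ
    -- s kills y since y = θ m and s • m = 0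
    have hsy : s • (a • s ^ n • x) = 0 := by
      rw [← hm, ← algebraMap_smul A s (θ m), ← map_smul, algebraMap_smul A s m, hsM, map_zero]
    -- hence a • x ∈ c (n+1) = c n
    have haxT : a • x ∈ T := Submodule.smul_mem _ a (Submodule.mem_span_singleton_self x)
    have h1 : (⟨a • x, haxT⟩ : T) ∈ c (n + 1) := by
      simp only [c, Submodule.mem_comap, LinearMap.mem_ker, LinearMap.smul_apply,
        LinearMap.id_apply, Submodule.coe_subtype]
      show s ^ (n + 1) • (a • x) = 0
      rw [hcomm (s ^ (n + 1)) a x, pow_succ, mul_comm, mul_smul, ← hcomm s a (s ^ n • x)]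
      exact hsy
    rw [← hn (n + 1) (Nat.le_succ n)] at h1
    simp only [c, Submodule.mem_comap, LinearMap.mem_ker, LinearMap.smul_apply,
      LinearMap.id_apply, Submodule.coe_subtype] at h1
    apply hy0
    rw [← hcomm (s ^ n) a x]
    exact h1
  -- conclude
  rw [← Module.notMem_support_iff, Module.notMem_support_iff']
  rintro ⟨m, hmK⟩
  obtain ⟨n, hn⟩ := key m
  exact ⟨s ^ n, p.asIdeal.primeCompl.pow_mem hsp n, Subtype.ext (by simpa using hn)⟩
end

section
/- Let O = k⟦u,v⟧/(uv). Every maximal Cohen–Macaulay O-module without free direct summands is isomorphic to a finite direct sum of copies of k⟦u⟧ and k⟦v⟧ (viewed as O-modules via the quotient maps O → k⟦u⟧ and O → k⟦v⟧). -/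
set_option maxHeartbeats 1600000
set_option synthInstance.maxHeartbeats 400000


open PowerSeries

/-- The complete nodal curve singularity `k⟦u,v⟧/(uv)`, realized concretely as the fibre
product `k⟦u⟧ ×_k k⟦v⟧`, i.e. the subring of `k⟦u⟧ × k⟦v⟧` of pairs of power series with
equal constant terms. -/
def NodalRing (k : Type) [Field k] : Subring (PowerSeries k × PowerSeries k) where
  carrier := {f | PowerSeries.constantCoeff f.1 = PowerSeries.constantCoeff f.2}
  mul_mem' := by
    intro a b ha hb
    simp only [Set.mem_setOf_eq, Prod.fst_mul, Prod.snd_mul, map_mul] at *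
    rw [ha, hb]
  add_mem' := by
    intro a b ha hb
    simp only [Set.mem_setOf_eq, Prod.fst_add, Prod.snd_add, map_add] at *
    rw [ha, hb]
  one_mem' := by simp
  zero_mem' := by simp
  neg_mem' := by
    intro a ha
    simp only [Set.mem_setOf_eq, Prod.fst_neg, Prod.snd_neg, map_neg] at *
    rw [ha]

/-- `k⟦u⟧` viewed as a module over the nodal ring via the first projection. -/
def Ku (k : Type) [Field k] : Type := PowerSeries k

instance (k : Type) [Field k] : AddCommGroup (Ku k) :=
  inferInstanceAs (AddCommGroup (PowerSeries k))

noncomputable instance (k : Type) [Field k] : Module ↥(NodalRing k) (Ku k) :=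
  Module.compHom (PowerSeries k)
    ((RingHom.fst (PowerSeries k) (PowerSeries k)).comp (NodalRing k).subtype)

/-- `k⟦v⟧` viewed as a module over the nodal ring via the second projection. -/
def Kv (k : Type) [Field k] : Type := PowerSeries k

instance (k : Type) [Field k] : AddCommGroup (Kv k) :=
  inferInstanceAs (AddCommGroup (PowerSeries k))

noncomputable instance (k : Type) [Field k] : Module ↥(NodalRing k) (Kv k) :=
  Module.compHom (PowerSeries k)
    ((RingHom.snd (PowerSeries k) (PowerSeries k)).comp (NodalRing k).subtype)

namespace Stmt19
variable (k : Type) [Field k]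

lemma mem_nodal_iff (f : PowerSeries k × PowerSeries k) :
    f ∈ NodalRing k ↔ constantCoeff f.1 = constantCoeff f.2 := Iff.rfl

noncomputable def uu : ↥(NodalRing k) := ⟨(X, 0), by simp [mem_nodal_iff]⟩
noncomputable def vv : ↥(NodalRing k) := ⟨(0, X), by simp [mem_nodal_iff]⟩

lemma uu_mul_vv : uu k * vv k = 0 := by
  refine Subtype.ext (Prod.ext ?_ ?_) <;> simp [uu, vv]

lemma t_nzd : uu k + vv k ∈ nonZeroDivisors ↥(NodalRing k) := by
  rw [mem_nonZeroDivisors_iff_right]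
  intro r hr
  have h1 : r.val.1 * X = 0 ∧ r.val.2 * X = 0 := by
    constructor
    · have := congrArg (fun z : ↥(NodalRing k) => z.val.1) hr
      simpa [uu, vv] using this
    · have := congrArg (fun z : ↥(NodalRing k) => z.val.2) hr
      simpa [uu, vv] using this
  refine Subtype.ext (Prod.ext ?_ ?_)
  · exact (mul_eq_zero.mp h1.1).resolve_right X_ne_zero
  · exact (mul_eq_zero.mp h1.2).resolve_right X_ne_zero

noncomputable def sig1 : PowerSeries k →+* ↥(NodalRing k) :=
  ((RingHom.id (PowerSeries k)).prod ((C).comp (constantCoeff))).codRestrict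
    (NodalRing k) (fun f => by simp [mem_nodal_iff])

noncomputable def sig2 : PowerSeries k →+* ↥(NodalRing k) :=
  (((C).comp (constantCoeff)).prod (RingHom.id (PowerSeries k))).codRestrict
    (NodalRing k) (fun f => by simp [mem_nodal_iff])

@[simp] lemma sig1_val (f : PowerSeries k) :
    (sig1 k f : PowerSeries k × PowerSeries k) = (f, C (constantCoeff f)) := rfl
@[simp] lemma sig2_val (f : PowerSeries k) :
    (sig2 k f : PowerSeries k × PowerSeries k) = (C (constantCoeff f), f) := rfl

lemma sig1_X : sig1 k X = uu k := by
  refine Subtype.ext (Prod.ext ?_ ?_) <;> simp [uu]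
lemma sig2_X : sig2 k X = vv k := by
  refine Subtype.ext (Prod.ext ?_ ?_) <;> simp [vv]

-- units of NodalRing
lemma isUnit_of_constCoeff (r : ↥(NodalRing k)) (h : constantCoeff r.val.1 ≠ 0) :
    IsUnit r := by
  have h2 : constantCoeff r.val.2 ≠ 0 := r.property ▸ h
  obtain ⟨w1, hw1⟩ := (isUnit_iff_constantCoeff).mpr (Ne.isUnit h)
  obtain ⟨w2, hw2⟩ := (isUnit_iff_constantCoeff).mpr (Ne.isUnit h2)
  have hc1 : constantCoeff (w1⁻¹ : _) = (constantCoeff r.val.1)⁻¹ := by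
    have := congrArg (constantCoeff) w1.mul_inv
    rw [map_mul, map_one, hw1] at this
    field_simp at this ⊢
    linear_combination this
  have hc2 : constantCoeff (w2⁻¹ : _) = (constantCoeff r.val.2)⁻¹ := by
    have := congrArg (constantCoeff) w2.mul_inv
    rw [map_mul, map_one, hw2] at this
    field_simp at this ⊢
    linear_combination this
  refine IsUnit.of_mul_eq_one (a := r) ⟨((w1⁻¹ : _), (w2⁻¹ : _)), ?_⟩ ?_
  · rw [mem_nodal_iff, hc1, hc2, r.property]
  · refine Subtype.ext (Prod.ext ?_ ?_)
    · show r.val.1 * (w1⁻¹ : _) = 1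
      rw [← hw1]; exact w1.mul_inv
    · show r.val.2 * (w2⁻¹ : _) = 1
      rw [← hw2]; exact w2.mul_inv

end Stmt19

namespace Stmt19
open Submodule
variable {k : Type} [Field k]

section ModuleLemmas
variable (M : Type) [AddCommGroup M] [Module ↥(NodalRing k) M]

/-- kernel of multiplication by `w`. -/
def Msub (w : ↥(NodalRing k)) : Submodule ↥(NodalRing k) M where
  carrier := {x | w • x = 0}
  add_mem' := by intro a b ha hb; simp only [Set.mem_setOf_eq, smul_add] at *; rw [ha, hb, add_zero]
  zero_mem' := by simp only [Set.mem_setOf_eq, smul_zero]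
  smul_mem' := by
    intro r x hx
    simp only [Set.mem_setOf_eq] at *
    rw [smul_smul, mul_comm, ← smul_smul, hx, smul_zero]

variable {M}

lemma zero_of_uu_vv (htf : ∀ (r : ↥(NodalRing k)) (x : M),
      r ∈ nonZeroDivisors ↥(NodalRing k) → r • x = 0 → x = 0)
    (x : M) (h1 : uu k • x = 0) (h2 : vv k • x = 0) : x = 0 := by
  refine htf _ x (t_nzd k) ?_
  rw [add_smul, h1, h2, add_zero]

end ModuleLemmas

section Quotients
variable {M : Type} [AddCommGroup M] [Module ↥(NodalRing k) M]

noncomputable instance modPA : Module (PowerSeries k) (M ⧸ Msub M (uu k)) :=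
  Module.compHom _ (sig1 k)
noncomputable instance modPB : Module (PowerSeries k) (M ⧸ Msub M (vv k)) :=
  Module.compHom _ (sig2 k)

lemma smulPA (f : PowerSeries k) (a : M ⧸ Msub M (uu k)) : f • a = sig1 k f • a := rfl
lemma smulPB (f : PowerSeries k) (b : M ⧸ Msub M (vv k)) : f • b = sig2 k f • b := rfl

-- `vv` acts as zero on `A`
lemma vv_smul_A (a : M ⧸ Msub M (uu k)) : vv k • a = 0 := by
  obtain ⟨x, rfl⟩ := Submodule.Quotient.mk_surjective _ a
  rw [← Submodule.Quotient.mk_smul, Submodule.Quotient.mk_eq_zero]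
  show uu k • (vv k • x) = 0
  rw [smul_smul, uu_mul_vv, zero_smul]

lemma uu_smul_B (b : M ⧸ Msub M (vv k)) : uu k • b = 0 := by
  obtain ⟨x, rfl⟩ := Submodule.Quotient.mk_surjective _ b
  rw [← Submodule.Quotient.mk_smul, Submodule.Quotient.mk_eq_zero]
  show vv k • (uu k • x) = 0
  rw [smul_smul, mul_comm, uu_mul_vv, zero_smul]

lemma fst_zero_smul_A (r : ↥(NodalRing k)) (h : (r : PowerSeries k × PowerSeries k).1 = 0)
    (a : M ⧸ Msub M (uu k)) : r • a = 0 := by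
  -- r = vv * sig2 g'
  have hc : constantCoeff (r : PowerSeries k × PowerSeries k).2 = 0 := by
    rw [← r.property, h, map_zero]
  obtain ⟨g', hg'⟩ := X_dvd_iff.mpr hc
  have : r = vv k * sig2 k g' := by
    refine Subtype.ext (Prod.ext ?_ ?_)
    · simp [h, vv]
    · simp [vv, hg']
  rw [this, ← smul_smul, vv_smul_A]

lemma snd_zero_smul_B (r : ↥(NodalRing k)) (h : (r : PowerSeries k × PowerSeries k).2 = 0)
    (b : M ⧸ Msub M (vv k)) : r • b = 0 := by
  have hc : constantCoeff (r : PowerSeries k × PowerSeries k).1 = 0 := by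
    rw [r.property, h, map_zero]
  obtain ⟨g', hg'⟩ := X_dvd_iff.mpr hc
  have : r = uu k * sig1 k g' := by
    refine Subtype.ext (Prod.ext ?_ ?_)
    · simp [uu, hg']
    · simp [h, uu]
  rw [this, ← smul_smul, uu_smul_B]

lemma r_smul_A (r : ↥(NodalRing k)) (a : M ⧸ Msub M (uu k)) :
    r • a = ((r : PowerSeries k × PowerSeries k).1) • a := by
  rw [smulPA]
  have : r • a - sig1 k (r : PowerSeries k × PowerSeries k).1 • a
      = (r - sig1 k (r : PowerSeries k × PowerSeries k).1) • a := (sub_smul _ _ _).symm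
  have hz : (r - sig1 k (r : PowerSeries k × PowerSeries k).1) • a = 0 := by
    refine fst_zero_smul_A _ ?_ a
    simp
  rw [← sub_eq_zero, this, hz]

lemma r_smul_B (r : ↥(NodalRing k)) (b : M ⧸ Msub M (vv k)) :
    r • b = ((r : PowerSeries k × PowerSeries k).2) • b := by
  rw [smulPB]
  have : r • b - sig2 k (r : PowerSeries k × PowerSeries k).2 • b
      = (r - sig2 k (r : PowerSeries k × PowerSeries k).2) • b := (sub_smul _ _ _).symm
  have hz : (r - sig2 k (r : PowerSeries k × PowerSeries k).2) • b = 0 := by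
    refine snd_zero_smul_B _ ?_ b
    simp
  rw [← sub_eq_zero, this, hz]

end Quotients

section BC
variable {M : Type} [AddCommGroup M] [Module ↥(NodalRing k) M]

section TorsionFree
variable (htf : ∀ (r : ↥(NodalRing k)) (x : M),
      r ∈ nonZeroDivisors ↥(NodalRing k) → r • x = 0 → x = 0)
include htf

lemma uu_smul_A_inj (a : M ⧸ Msub M (uu k)) (h : uu k • a = 0) : a = 0 := by
  obtain ⟨x, rfl⟩ := Submodule.Quotient.mk_surjective _ a
  rw [← Submodule.Quotient.mk_smul, Submodule.Quotient.mk_eq_zero] at h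
  have h1 : uu k • (uu k • x) = 0 := h
  have h2 : vv k • (uu k • x) = 0 := by
    rw [smul_smul, mul_comm, uu_mul_vv, zero_smul]
  rw [Submodule.Quotient.mk_eq_zero]
  show uu k • x = 0
  exact zero_of_uu_vv htf _ h1 h2

lemma vv_smul_B_inj (b : M ⧸ Msub M (vv k)) (h : vv k • b = 0) : b = 0 := by
  obtain ⟨x, rfl⟩ := Submodule.Quotient.mk_surjective _ b
  rw [← Submodule.Quotient.mk_smul, Submodule.Quotient.mk_eq_zero] at h
  have h2 : vv k • (vv k • x) = 0 := h
  have h1 : uu k • (vv k • x) = 0 := by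
    rw [smul_smul, uu_mul_vv, zero_smul]
  rw [Submodule.Quotient.mk_eq_zero]
  show vv k • x = 0
  exact zero_of_uu_vv htf _ h1 h2

lemma X_smul_A_inj (a : M ⧸ Msub M (uu k)) (h : (X : PowerSeries k) • a = 0) : a = 0 := by
  refine uu_smul_A_inj htf a ?_
  calc uu k • a = sig1 k X • a := by rw [sig1_X]
    _ = X • a := (smulPA X a).symm
    _ = 0 := h

lemma X_smul_B_inj (b : M ⧸ Msub M (vv k)) (h : (X : PowerSeries k) • b = 0) : b = 0 := by
  refine vv_smul_B_inj htf b ?_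
  calc vv k • b = sig2 k X • b := by rw [sig2_X]
    _ = X • b := (smulPB X b).symm
    _ = 0 := h

lemma nzsd_A : NoZeroSMulDivisors (PowerSeries k) (M ⧸ Msub M (uu k)) := by
  refine ⟨fun {f a} hfa => ?_⟩
  by_cases hf : f = 0
  · exact Or.inl hf
  refine Or.inr ?_
  have hdec := X_pow_order_mul_divXPowOrder (f := f)
  rw [← hdec, mul_smul] at hfa
  have hXpow : ∀ (m : ℕ) (a : M ⧸ Msub M (uu k)), (X : PowerSeries k) ^ m • a = 0 → a = 0 := by
    intro m
    induction m with
    | zero => intro a ha; simpa using ha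
    | succ m ih =>
      intro a ha
      rw [pow_succ, mul_smul] at ha
      exact X_smul_A_inj htf a (ih _ ha)
  have hd : divXPowOrder f • a = 0 := hXpow _ _ hfa
  obtain ⟨w, hw⟩ := isUnit_divided_by_X_pow_order hf
  have hz : (w : PowerSeries k) • a = 0 := by rw [hw]; exact hd
  have hkey : ((w⁻¹ : k⟦X⟧ˣ) : PowerSeries k) • ((w : PowerSeries k) • a) = a := by
    rw [← mul_smul, Units.inv_mul, one_smul]
  rw [hz, smul_zero] at hkey
  exact hkey.symm

lemma nzsd_B : NoZeroSMulDivisors (PowerSeries k) (M ⧸ Msub M (vv k)) := by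
  refine ⟨fun {f b} hfb => ?_⟩
  by_cases hf : f = 0
  · exact Or.inl hf
  refine Or.inr ?_
  have hdec := X_pow_order_mul_divXPowOrder (f := f)
  rw [← hdec, mul_smul] at hfb
  have hXpow : ∀ (m : ℕ) (b : M ⧸ Msub M (vv k)), (X : PowerSeries k) ^ m • b = 0 → b = 0 := by
    intro m
    induction m with
    | zero => intro b hb; simpa using hb
    | succ m ih =>
      intro b hb
      rw [pow_succ, mul_smul] at hb
      exact X_smul_B_inj htf b (ih _ hb)
  have hd : divXPowOrder f • b = 0 := hXpow _ _ hfb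
  obtain ⟨w, hw⟩ := isUnit_divided_by_X_pow_order hf
  have hz : (w : PowerSeries k) • b = 0 := by rw [hw]; exact hd
  have hkey : ((w⁻¹ : k⟦X⟧ˣ) : PowerSeries k) • ((w : PowerSeries k) • b) = b := by
    rw [← mul_smul, Units.inv_mul, one_smul]
  rw [hz, smul_zero] at hkey
  exact hkey.symm

end TorsionFree

section Finiteness

lemma span_P_top {N : Type} [AddCommGroup N] [Module ↥(NodalRing k) N]
    [Module (PowerSeries k) N]
    (π : ↥(NodalRing k) → PowerSeries k)
    (hcompat : ∀ (r : ↥(NodalRing k)) (x : N), r • x = π r • x)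
    (S : Set N) (h : span ↥(NodalRing k) S = ⊤) : span (PowerSeries k) S = ⊤ := by
  let N0 : Submodule ↥(NodalRing k) N :=
    { carrier := (span (PowerSeries k) S : Set N)
      add_mem' := fun ha hb => Submodule.add_mem _ ha hb
      zero_mem' := Submodule.zero_mem _
      smul_mem' := fun r x hx => by
        show r • x ∈ span (PowerSeries k) S
        rw [hcompat]
        exact Submodule.smul_mem _ _ hx }
  have hle : span ↥(NodalRing k) S ≤ N0 := span_le.mpr subset_span
  rw [h] at hle
  exact eq_top_iff'.mpr fun x => hle trivial

lemma finite_P_A [Module.Finite ↥(NodalRing k) M] :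
    Module.Finite (PowerSeries k) (M ⧸ Msub M (uu k)) := by
  obtain ⟨S, hS⟩ := Module.Finite.fg_top (R := ↥(NodalRing k)) (M := M ⧸ Msub M (uu k))
  exact ⟨S, span_P_top _ (fun r x => r_smul_A r x) _ hS⟩

lemma finite_P_B [Module.Finite ↥(NodalRing k) M] :
    Module.Finite (PowerSeries k) (M ⧸ Msub M (vv k)) := by
  obtain ⟨S, hS⟩ := Module.Finite.fg_top (R := ↥(NodalRing k)) (M := M ⧸ Msub M (vv k))
  exact ⟨S, span_P_top _ (fun r x => r_smul_B r x) _ hS⟩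

end Finiteness
end BC

section Subspace
variable {E1 E2 : Type} [AddCommGroup E1] [Module k E1] [AddCommGroup E2] [Module k E2]
  [FiniteDimensional k E1] [FiniteDimensional k E2]

/-- the part of `W` lying in `E1 × 0`. -/
def leftPart (W : Submodule k (E1 × E2)) : Submodule k E1 where
  carrier := {e | (e, 0) ∈ W}
  add_mem' := by
    intro a b ha hb
    have := W.add_mem ha hb
    simpa using this
  zero_mem' := by exact W.zero_mem
  smul_mem' := by
    intro c x hx
    have := W.smul_mem c hx
    simpa [Prod.smul_mk] using this

lemma subspace_lemma_aux (W : Submodule k (E1 × E2))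
    (h1 : ∀ e : E1, ∃ w ∈ W, w.1 = e) (h2 : ∀ e : E2, ∃ w ∈ W, w.2 = e)
    (hS : leftPart W ≠ ⊤) :
    ∃ (α : E1 →ₗ[k] k) (β : E2 →ₗ[k] k) (w : E1 × E2), w ∈ W ∧ α w.1 = 1 ∧ β w.2 = 1 ∧
      ∀ w' ∈ W, α w'.1 = β w'.2 := by
  -- a functional vanishing on `leftPart W`, nonzero somewhere
  obtain ⟨e0, he0⟩ : ∃ e0 : E1, e0 ∉ leftPart W := by
    by_contra hc
    push_neg at hc
    exact hS (eq_top_iff'.mpr hc)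
  obtain ⟨α0, hα0ne, hα0map⟩ := (leftPart W).exists_dual_map_eq_bot_of_notMem he0 inferInstance
  have hα0van : ∀ e ∈ leftPart W, α0 e = 0 := by
    intro e he
    have : α0 e ∈ (leftPart W).map α0 := Submodule.mem_map_of_mem he
    rw [hα0map] at this
    simpa using this
  -- a linear section of the second projection restricted to W
  have hrange : LinearMap.range ((LinearMap.snd k E1 E2).comp W.subtype) = ⊤ := by
    rw [LinearMap.range_eq_top]
    intro e
    obtain ⟨w, hw, hwe⟩ := h2 e
    exact ⟨⟨w, hw⟩, hwe⟩
  obtain ⟨s, hs⟩ := ((LinearMap.snd k E1 E2).comp W.subtype).exists_rightInverse_of_surjective hrange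
  set β0 : E2 →ₗ[k] k := α0 ∘ₗ (LinearMap.fst k E1 E2) ∘ₗ W.subtype ∘ₗ s with hβ0
  have hmatch : ∀ w ∈ W, α0 w.1 = β0 w.2 := by
    intro w hw
    have hd2 : ((s w.2 : E1 × E2)).2 = w.2 := by
      have := congrArg (fun φ => φ w.2) hs
      simpa using this
    have hdiff : ((s w.2 : E1 × E2).1 - w.1) ∈ leftPart W := by
      have hmem : ((s w.2 : E1 × E2) - w) ∈ W := W.sub_mem (s w.2).2 hw
      have : ((s w.2 : E1 × E2) - w) = ((s w.2 : E1 × E2).1 - w.1, 0) := by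
        ext
        · rfl
        · show (s w.2 : E1 × E2).2 - w.2 = 0
          rw [hd2, sub_self]
      rw [this] at hmem
      exact hmem
    have := hα0van _ hdiff
    rw [map_sub, sub_eq_zero] at this
    rw [hβ0]
    simpa using this.symm
  -- find a point where α0 is nonzero
  obtain ⟨w0, hw0W, hw01⟩ := h1 e0
  have hc0 : α0 w0.1 ≠ 0 := by rw [hw01]; exact hα0ne
  refine ⟨(α0 w0.1)⁻¹ • α0, (α0 w0.1)⁻¹ • β0, w0, hw0W, ?_, ?_, ?_⟩
  · simp [inv_mul_cancel₀ hc0]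
  · have := hmatch w0 hw0W
    simp [← this, inv_mul_cancel₀ hc0]
  · intro w' hw'
    have := hmatch w' hw'
    simp [this]

lemma subspace_lemma (W : Submodule k (E1 × E2)) (hW : W ≠ ⊤)
    (h1 : ∀ e : E1, ∃ w ∈ W, w.1 = e) (h2 : ∀ e : E2, ∃ w ∈ W, w.2 = e) :
    ∃ (α : E1 →ₗ[k] k) (β : E2 →ₗ[k] k) (w : E1 × E2), w ∈ W ∧ α w.1 = 1 ∧ β w.2 = 1 ∧
      ∀ w' ∈ W, α w'.1 = β w'.2 := by
  by_cases hS : leftPart W = ⊤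
  · -- then the right part must be proper
    have hS2 : leftPart (W.map (LinearEquiv.prodComm k E1 E2).toLinearMap) ≠ ⊤ := by
      intro htop
      apply hW
      rw [eq_top_iff']
      intro ⟨e1, e2⟩
      have hl : (e1, (0 : E2)) ∈ W := by
        have : e1 ∈ leftPart W := hS ▸ trivial
        exact this
      have hr : ((0 : E1), e2) ∈ W := by
        have h2' : e2 ∈ leftPart (W.map (LinearEquiv.prodComm k E1 E2).toLinearMap) := htop ▸ trivial
        obtain ⟨w, hw, hwe⟩ := h2'
        have : w = ((0 : E1), e2) := by
          have h1' := congrArg Prod.fst hwe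
          have h2'' := congrArg Prod.snd hwe
          simp [LinearEquiv.prodComm] at h1' h2''
          exact Prod.ext h2'' h1'
        rwa [this] at hw
      have := W.add_mem hl hr
      simpa using this
    obtain ⟨β, α, w', hw'W, hβ1, hα1, hmatch⟩ :=
      subspace_lemma_aux (W.map (LinearEquiv.prodComm k E1 E2).toLinearMap)
        (fun e2 => by
          obtain ⟨w, hw, hwe⟩ := h2 e2
          exact ⟨(w.2, w.1), ⟨w, hw, rfl⟩, hwe⟩)
        (fun e1 => by
          obtain ⟨w, hw, hwe⟩ := h1 e1
          exact ⟨(w.2, w.1), ⟨w, hw, rfl⟩, hwe⟩)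
        hS2
    obtain ⟨w, hwW, hwe⟩ := hw'W
    have hw2 : w' = (w.2, w.1) := hwe.symm
    refine ⟨α, β, w, hwW, ?_, ?_, ?_⟩
    · rw [hw2] at hα1; exact hα1
    · rw [hw2] at hβ1; exact hβ1
    · intro z hz
      have := hmatch (z.2, z.1) ⟨z, hz, rfl⟩
      exact this.symm
  · exact subspace_lemma_aux W h1 h2 hS

end Subspace
end Stmt19

namespace Stmt19
open Submodule
variable {k : Type} [Field k]
variable {M : Type} [AddCommGroup M] [Module ↥(NodalRing k) M]

section Main
variable (p q : ℕ)
variable (cA : (M ⧸ Msub M (uu k)) ≃ₗ[PowerSeries k] (Fin p → PowerSeries k))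
variable (cB : (M ⧸ Msub M (vv k)) ≃ₗ[PowerSeries k] (Fin q → PowerSeries k))

noncomputable def rho : M → (Fin p → k) × (Fin q → k) := fun x =>
  (fun i => constantCoeff (cA ((Msub M (uu k)).mkQ x) i),
   fun j => constantCoeff (cB ((Msub M (vv k)).mkQ x) j))

lemma rho_add (x y : M) :
    rho p q cA cB (x + y) = rho p q cA cB x + rho p q cA cB y := by
  refine Prod.ext ?_ ?_ <;> funext i <;>
    simp [rho, map_add]

lemma rho_smul (c : k) (x : M) :
    rho p q cA cB (sig1 k (C c) • x) = c • rho p q cA cB x := by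
  refine Prod.ext ?_ ?_ <;> funext i
  · show constantCoeff (cA ((Msub M (uu k)).mkQ (sig1 k (C c) • x)) i) = c * _
    rw [map_smul, r_smul_A]
    have h1 : ((sig1 k (C c) : PowerSeries k × PowerSeries k)).1 = C c := rfl
    rw [h1, map_smul]
    show constantCoeff (C c * _) = _
    rw [map_mul, constantCoeff_C]
    rfl
  · show constantCoeff (cB ((Msub M (vv k)).mkQ (sig1 k (C c) • x)) i) = c * _
    rw [map_smul, r_smul_B]
    have h1 : ((sig1 k (C c) : PowerSeries k × PowerSeries k)).2 = C c := by
      simp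
    rw [h1, map_smul]
    show constantCoeff (C c * _) = _
    rw [map_mul, constantCoeff_C]
    rfl

noncomputable def Wsub : Submodule k ((Fin p → k) × (Fin q → k)) where
  carrier := Set.range (rho p q cA cB)
  add_mem' := by
    rintro _ _ ⟨x, rfl⟩ ⟨y, rfl⟩
    exact ⟨x + y, rho_add p q cA cB x y⟩
  zero_mem' := by
    refine ⟨0, ?_⟩
    refine Prod.ext ?_ ?_ <;> funext i <;> simp [rho, map_zero]
  smul_mem' := by
    rintro c _ ⟨x, rfl⟩
    exact ⟨sig1 k (C c) • x, rho_smul p q cA cB c x⟩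

lemma Wsub_fst_surj (e : Fin p → k) : ∃ w ∈ Wsub p q cA cB, w.1 = e := by
  obtain ⟨x, hx⟩ := Submodule.Quotient.mk_surjective (Msub M (uu k))
    (cA.symm (fun i => C (e i)))
  refine ⟨rho p q cA cB x, ⟨x, rfl⟩, ?_⟩
  funext i
  show constantCoeff (cA ((Msub M (uu k)).mkQ x) i) = e i
  rw [Submodule.mkQ_apply, hx, cA.apply_symm_apply, constantCoeff_C]

lemma Wsub_snd_surj (e : Fin q → k) : ∃ w ∈ Wsub p q cA cB, w.2 = e := by
  obtain ⟨x, hx⟩ := Submodule.Quotient.mk_surjective (Msub M (vv k))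
    (cB.symm (fun i => C (e i)))
  refine ⟨rho p q cA cB x, ⟨x, rfl⟩, ?_⟩
  funext i
  show constantCoeff (cB ((Msub M (vv k)).mkQ x) i) = e i
  rw [Submodule.mkQ_apply, hx, cB.apply_symm_apply, constantCoeff_C]

/-- If the subspace `W` is proper we can construct a surjection onto the nodal ring. -/
lemma exists_surj_of_W_ne_top (hW : Wsub p q cA cB ≠ ⊤) :
    ∃ F : M →ₗ[↥(NodalRing k)] ↥(NodalRing k), Function.Surjective F := by
  obtain ⟨α, β, w0, hw0W, hα1, hβ1, hmatch⟩ :=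
    subspace_lemma (Wsub p q cA cB) hW (Wsub_fst_surj p q cA cB) (Wsub_snd_surj p q cA cB)
  obtain ⟨x0, hx0⟩ : ∃ x0 : M, rho p q cA cB x0 = w0 := hw0W
  -- the two lifted functionals
  set lamA : (M ⧸ Msub M (uu k)) → PowerSeries k :=
    fun a => ∑ i, cA a i * C (α (fun j => if i = j then 1 else 0)) with hlamA
  set lamB : (M ⧸ Msub M (vv k)) → PowerSeries k :=
    fun b => ∑ j, cB b j * C (β (fun j' => if j = j' then 1 else 0)) with hlamB
  have hconstA : ∀ a, constantCoeff (lamA a) = α (fun i => constantCoeff (cA a i)) := by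
    intro a
    rw [hlamA]
    simp only [map_sum, map_mul, constantCoeff_C]
    rw [LinearMap.pi_apply_eq_sum_univ α (fun i => constantCoeff (cA a i))]
    simp only [smul_eq_mul]
  have hconstB : ∀ b, constantCoeff (lamB b) = β (fun j => constantCoeff (cB b j)) := by
    intro b
    rw [hlamB]
    simp only [map_sum, map_mul, constantCoeff_C]
    rw [LinearMap.pi_apply_eq_sum_univ β (fun j => constantCoeff (cB b j))]
    simp only [smul_eq_mul]
  have hmem : ∀ x : M, (lamA ((Msub M (uu k)).mkQ x), lamB ((Msub M (vv k)).mkQ x)) ∈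
      NodalRing k := by
    intro x
    rw [mem_nodal_iff]
    show constantCoeff (lamA _) = constantCoeff (lamB _)
    rw [hconstA, hconstB]
    exact hmatch (rho p q cA cB x) ⟨x, rfl⟩
  -- linearity of lamA, lamB
  have hlamA_add : ∀ a a', lamA (a + a') = lamA a + lamA a' := by
    intro a a'
    rw [hlamA]
    simp [map_add, add_mul, Finset.sum_add_distrib]
  have hlamB_add : ∀ b b', lamB (b + b') = lamB b + lamB b' := by
    intro b b'
    rw [hlamB]
    simp [map_add, add_mul, Finset.sum_add_distrib]
  have hlamA_smul : ∀ (f : PowerSeries k) a, lamA (f • a) = f * lamA a := by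
    intro f a
    rw [hlamA]
    simp only [map_smul]
    show ∑ i, f * cA a i * C (α (fun j => if i = j then 1 else 0)) = f * ∑ i, cA a i * C (α (fun j => if i = j then 1 else 0))
    rw [Finset.mul_sum]
    exact Finset.sum_congr rfl fun i _ => by ring
  have hlamB_smul : ∀ (f : PowerSeries k) b, lamB (f • b) = f * lamB b := by
    intro f b
    rw [hlamB]
    simp only [map_smul]
    show ∑ j, f * cB b j * C (β (fun j' => if j = j' then 1 else 0)) = f * ∑ j, cB b j * C (β (fun j' => if j = j' then 1 else 0))
    rw [Finset.mul_sum]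
    exact Finset.sum_congr rfl fun j _ => by ring
  set F : M →ₗ[↥(NodalRing k)] ↥(NodalRing k) :=
    { toFun := fun x => ⟨(lamA ((Msub M (uu k)).mkQ x), lamB ((Msub M (vv k)).mkQ x)), hmem x⟩
      map_add' := fun x y => by
        refine Subtype.ext (Prod.ext ?_ ?_)
        · show lamA _ = lamA _ + lamA _
          rw [map_add, hlamA_add]
        · show lamB _ = lamB _ + lamB _
          rw [map_add, hlamB_add]
      map_smul' := fun r x => by
        refine Subtype.ext (Prod.ext ?_ ?_)
        · show lamA ((Msub M (uu k)).mkQ (r • x))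
            = (r : PowerSeries k × PowerSeries k).1 * lamA ((Msub M (uu k)).mkQ x)
          rw [map_smul, r_smul_A, hlamA_smul]
        · show lamB ((Msub M (vv k)).mkQ (r • x))
            = (r : PowerSeries k × PowerSeries k).2 * lamB ((Msub M (vv k)).mkQ x)
          rw [map_smul, r_smul_B, hlamB_smul] } with hF
  refine ⟨F, ?_⟩
  -- F x0 is a unit
  have hFx0c : constantCoeff ((F x0 : PowerSeries k × PowerSeries k)).1 = 1 := by
    show constantCoeff (lamA _) = 1
    rw [hconstA]
    have : (fun i => constantCoeff (cA ((Msub M (uu k)).mkQ x0) i)) = w0.1 := by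
      rw [← hx0]; rfl
    rw [this, hα1]
  have hunit : IsUnit (F x0) := by
    refine isUnit_of_constCoeff k (F x0) ?_
    rw [hFx0c]; exact one_ne_zero
  obtain ⟨U, hU⟩ := hunit
  intro r
  refine ⟨(r * ↑U⁻¹) • x0, ?_⟩
  rw [map_smul]
  show (r * ↑U⁻¹) * F x0 = r
  rw [← hU, mul_assoc, U.inv_mul, mul_one]

/-- If `W` is everything, the natural map `M → A × B` is surjective. -/
lemma phi_surj (hW : Wsub p q cA cB = ⊤) :
    Function.Surjective ((Msub M (uu k)).mkQ.prod ((Msub M (vv k)).mkQ)) := by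
  rintro ⟨a, b⟩
  -- first, match constant terms
  have hmem : (((fun i => constantCoeff (cA a i)) : Fin p → k),
      ((fun j => constantCoeff (cB b j)) : Fin q → k)) ∈ Wsub p q cA cB := hW ▸ trivial
  obtain ⟨x1, hx1⟩ : ∃ x1 : M, rho p q cA cB x1 =
      (((fun i => constantCoeff (cA a i)) : Fin p → k),
       ((fun j => constantCoeff (cB b j)) : Fin q → k)) := hmem
  set a' := a - (Msub M (uu k)).mkQ x1 with ha'
  set b' := b - (Msub M (vv k)).mkQ x1 with hb'
  have hca' : ∀ i, constantCoeff (cA a' i) = 0 := by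
    intro i
    rw [ha', map_sub]
    show constantCoeff (cA a i - cA ((Msub M (uu k)).mkQ x1) i) = 0
    rw [map_sub]
    have := congrArg (fun w => w.1 i) hx1
    simp only [rho] at this
    rw [this]
    ring
  have hcb' : ∀ j, constantCoeff (cB b' j) = 0 := by
    intro j
    rw [hb', map_sub]
    show constantCoeff (cB b j - cB ((Msub M (vv k)).mkQ x1) j) = 0
    rw [map_sub]
    have := congrArg (fun w => w.2 j) hx1
    simp only [rho] at this
    rw [this]
    ring
  -- a' is divisible by X, hence in the image with 0 second component
  have hdivA : ∀ i, ∃ g, cA a' i = X * g := fun i => X_dvd_iff.mpr (hca' i)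
  choose g hg using hdivA
  obtain ⟨xa, hxa⟩ := Submodule.Quotient.mk_surjective (Msub M (uu k)) (cA.symm g)
  have hmkAa : (Msub M (uu k)).mkQ (uu k • xa) = a' := by
    rw [map_smul]
    have h1 : uu k • ((Msub M (uu k)).mkQ xa) = (X : PowerSeries k) • ((Msub M (uu k)).mkQ xa) := by
      rw [smulPA, sig1_X]
    rw [h1]
    apply cA.injective
    rw [map_smul]
    rw [Submodule.mkQ_apply, hxa, cA.apply_symm_apply]
    funext i
    show (X : PowerSeries k) * g i = cA a' i
    rw [hg i]
  have hmkBa : (Msub M (vv k)).mkQ (uu k • xa) = 0 := by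
    rw [map_smul]
    exact uu_smul_B _
  have hdivB : ∀ j, ∃ g, cB b' j = X * g := fun j => X_dvd_iff.mpr (hcb' j)
  choose g2 hg2 using hdivB
  obtain ⟨xb, hxb⟩ := Submodule.Quotient.mk_surjective (Msub M (vv k)) (cB.symm g2)
  have hmkBb : (Msub M (vv k)).mkQ (vv k • xb) = b' := by
    rw [map_smul]
    have h1 : vv k • ((Msub M (vv k)).mkQ xb) = (X : PowerSeries k) • ((Msub M (vv k)).mkQ xb) := by
      rw [smulPB, sig2_X]
    rw [h1]
    apply cB.injective
    rw [map_smul]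
    rw [Submodule.mkQ_apply, hxb, cB.apply_symm_apply]
    funext j
    show (X : PowerSeries k) * g2 j = cB b' j
    rw [hg2 j]
  have hmkAb : (Msub M (uu k)).mkQ (vv k • xb) = 0 := by
    rw [map_smul]
    exact vv_smul_A _
  refine ⟨x1 + uu k • xa + vv k • xb, ?_⟩
  refine Prod.ext ?_ ?_
  · show (Msub M (uu k)).mkQ (x1 + uu k • xa + vv k • xb) = a
    rw [map_add, map_add, hmkAa, hmkAb, ha']
    abel
  · show (Msub M (vv k)).mkQ (x1 + uu k • xa + vv k • xb) = b
    rw [map_add, map_add, hmkBb, hmkBa, hb']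
    abel

end Main
end Stmt19

open Stmt19 Submodule in
/-- Let `O = k⟦u,v⟧/(uv)`.  Every maximal Cohen–Macaulay `O`-module
(i.e. finitely generated torsion-free module) without free direct summands is isomorphic to a
finite direct sum of copies of `k⟦u⟧` and `k⟦v⟧`. -/
theorem stmt19 (k : Type) [Field k]
    (M : Type) [AddCommGroup M] [Module ↥(NodalRing k) M]
    [Module.Finite ↥(NodalRing k) M]
    (htf : ∀ (r : ↥(NodalRing k)) (x : M),
      r ∈ nonZeroDivisors ↥(NodalRing k) → r • x = 0 → x = 0)
    (hnofree : ¬ ∃ f : M →ₗ[↥(NodalRing k)] ↥(NodalRing k), Function.Surjective f) :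
    ∃ p q : ℕ,
      Nonempty (M ≃ₗ[↥(NodalRing k)] ((Fin p → Ku k) × (Fin q → Kv k))) := by
  classical
  haveI := nzsd_A (M := M) htf
  haveI := nzsd_B (M := M) htf
  haveI := finite_P_A (M := M) (k := k)
  haveI := finite_P_B (M := M) (k := k)
  haveI : Module.Free (PowerSeries k) (M ⧸ Msub M (uu k)) :=
    Module.free_of_finite_type_torsion_free'
  haveI : Module.Free (PowerSeries k) (M ⧸ Msub M (vv k)) :=
    Module.free_of_finite_type_torsion_free'
  set p := Fintype.card
    (Module.Free.ChooseBasisIndex (PowerSeries k) (M ⧸ Msub M (uu k))) with hp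
  set q := Fintype.card
    (Module.Free.ChooseBasisIndex (PowerSeries k) (M ⧸ Msub M (vv k))) with hq
  let cA : (M ⧸ Msub M (uu k)) ≃ₗ[PowerSeries k] (Fin p → PowerSeries k) :=
    ((Module.Free.chooseBasis (PowerSeries k) (M ⧸ Msub M (uu k))).reindex
      (Fintype.equivFin _)).equivFun
  let cB : (M ⧸ Msub M (vv k)) ≃ₗ[PowerSeries k] (Fin q → PowerSeries k) :=
    ((Module.Free.chooseBasis (PowerSeries k) (M ⧸ Msub M (vv k))).reindex
      (Fintype.equivFin _)).equivFun
  -- the subspace of matching constant terms is everything, else there is a surjection onto O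
  have hW : Wsub p q cA cB = ⊤ := by
    by_contra hWne
    exact hnofree (exists_surj_of_W_ne_top p q cA cB hWne)
  have hsurj := phi_surj p q cA cB hW
  have hinj : Function.Injective ((Msub M (uu k)).mkQ.prod ((Msub M (vv k)).mkQ)) := by
    intro x y hxy
    have h0 : ((Msub M (uu k)).mkQ.prod ((Msub M (vv k)).mkQ)) (x - y) = 0 := by
      rw [map_sub, hxy, sub_self]
    have h1 : (Msub M (uu k)).mkQ (x - y) = 0 := congrArg Prod.fst h0
    have h2 : (Msub M (vv k)).mkQ (x - y) = 0 := congrArg Prod.snd h0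
    rw [Submodule.mkQ_apply, Submodule.Quotient.mk_eq_zero] at h1 h2
    have := zero_of_uu_vv htf (x - y) h1 h2
    exact sub_eq_zero.mp this
  let eM : M ≃ₗ[↥(NodalRing k)]
      ((M ⧸ Msub M (uu k)) × (M ⧸ Msub M (vv k))) :=
    LinearEquiv.ofBijective ((Msub M (uu k)).mkQ.prod ((Msub M (vv k)).mkQ)) ⟨hinj, hsurj⟩
  let eA : (M ⧸ Msub M (uu k)) ≃ₗ[↥(NodalRing k)] (Fin p → Ku k) :=
    { toFun := fun a => cA a
      invFun := fun g => cA.symm g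
      left_inv := fun a => cA.symm_apply_apply a
      right_inv := fun g => cA.apply_symm_apply g
      map_add' := fun a a' => cA.map_add a a'
      map_smul' := fun r a => by
        show cA (r • a) = _
        rw [r_smul_A, map_smul]
        rfl }
  let eB : (M ⧸ Msub M (vv k)) ≃ₗ[↥(NodalRing k)] (Fin q → Kv k) :=
    { toFun := fun b => cB b
      invFun := fun g => cB.symm g
      left_inv := fun b => cB.symm_apply_apply b
      right_inv := fun g => cB.apply_symm_apply g
      map_add' := fun b b' => cB.map_add b b'
      map_smul' := fun r b => by
        show cB (r • b) = _
        rw [r_smul_B, map_smul]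
        rfl }
  exact ⟨p, q, ⟨eM.trans (eA.prodCongr eB)⟩⟩
end
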